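/- Let V : ℝ → ℝ be convex with |V(x)| ≤ C(1 + |x|^k) for some constants C > 0 and k ∈ ℕ. Let σ, T, σ_β > 0, m_β ∈ ℝ, set λ := √(1 + σ_β²/(σ²T)) and I(z) := −(z + m_β)/λ. Let μ be the Gaussian measure on ℝ with mean −m_β and variance σ_β² + σ²T and let ν be the Gaussian measure on ℝ with mean 0 and variance σ²T. Then for every Borel probability measure π on ℝ × ℝ whose pushforward under the first projection is μ and under the second projection is ν, one has ∫ V(y − z) dπ(z, y) ≤ ∫ V(I(z) − z) dμ(z). -/

import Mathlib

open MeasureTheory ProbabilityTheory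
open scoped NNReal ENNReal

namespace ActivistAux

open Set

/-! ### Right derivative of a convex function on ℝ -/

/-- The right derivative of a convex function, defined as the infimum of forward slopes. -/
noncomputable def rder (V : ℝ → ℝ) (x : ℝ) : ℝ := sInf (slope V x '' Set.Ioi x)

variable {V : ℝ → ℝ}

lemma mem_diff_singleton {x t : ℝ} (h : t ≠ x) : t ∈ (Set.univ : Set ℝ) \ {x} :=
  ⟨trivial, h⟩

lemma bddBelow_slope (hV : ConvexOn ℝ Set.univ V) (x : ℝ) :
    BddBelow (slope V x '' Set.Ioi x) := by
  refine ⟨slope V x (x - 1), ?_⟩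
  rintro r ⟨t, ht, rfl⟩
  exact hV.slope_mono (mem_univ x) (mem_diff_singleton (by linarith))
    (mem_diff_singleton (ne_of_gt ht)) (by simp at ht ⊢; linarith)

lemma rder_le_slope (hV : ConvexOn ℝ Set.univ V) {x y : ℝ} (h : x < y) :
    rder V x ≤ slope V x y :=
  csInf_le (bddBelow_slope hV x) ⟨y, h, rfl⟩

lemma slope_le_rder (hV : ConvexOn ℝ Set.univ V) {w x : ℝ} (h : w < x) :
    slope V x w ≤ rder V x := by
  refine le_csInf ⟨slope V x (x + 1), ⟨x + 1, by simp, rfl⟩⟩ ?_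
  rintro r ⟨t, ht, rfl⟩
  exact hV.slope_mono (mem_univ x) (mem_diff_singleton (ne_of_lt h))
    (mem_diff_singleton (ne_of_gt ht)) (by simp at ht ⊢; linarith)

lemma rder_mono (hV : ConvexOn ℝ Set.univ V) : Monotone (rder V) := by
  intro x x' h
  rcases eq_or_lt_of_le h with rfl | h
  · exact le_rfl
  · calc rder V x ≤ slope V x x' := rder_le_slope hV h
      _ = slope V x' x := slope_comm V x x'
      _ ≤ rder V x' := slope_le_rder hV h

lemma rder_hasDeriv (hV : ConvexOn ℝ Set.univ V) (x : ℝ) :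
    HasDerivWithinAt V (rder V x) (Set.Ioi x) x := by
  rw [hasDerivWithinAt_iff_tendsto_slope' (notMem_Ioi_self)]
  exact MonotoneOn.tendsto_nhdsGT
    ((hV.slope_mono (mem_univ x)).mono (fun t ht => mem_diff_singleton (ne_of_gt ht)))
    (bddBelow_slope hV x)

lemma rder_ftc (hV : ConvexOn ℝ Set.univ V) (hc : Continuous V) (u v : ℝ) :
    ∫ t in u..v, rder V t = V v - V u := by
  have base : ∀ u v : ℝ, u ≤ v → ∫ t in u..v, rder V t = V v - V u := by
    intro u v h
    exact intervalIntegral.integral_eq_sub_of_hasDeriv_right_of_le h hc.continuousOn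
      (fun x _ => rder_hasDeriv hV x) ((rder_mono hV).intervalIntegrable)
  rcases le_total u v with h | h
  · exact base u v h
  · rw [intervalIntegral.integral_symm, base v u h]; ring

/-- Crude polynomial growth bound for the right derivative. -/
lemma rder_growth (hV : ConvexOn ℝ Set.univ V) {C : ℝ} {k : ℕ}
    (hb : ∀ x, |V x| ≤ C * (1 + |x|) ^ k) (x : ℝ) :
    |rder V x| ≤ (2 * C * 2 ^ k) * (1 + |x|) ^ k := by
  have h1x : (0:ℝ) ≤ 1 + |x| := by positivity
  have hC : 0 ≤ C := by
    have h := hb 0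
    simp at h
    nlinarith [abs_nonneg (V 0)]
  have key : ∀ y : ℝ, |y - x| ≤ 1 → |V y| ≤ C * 2 ^ k * (1 + |x|) ^ k := by
    intro y hy
    have hy2 : |y| ≤ 1 + |x| := by
      have := abs_sub_abs_le_abs_sub y x
      linarith
    have step : (1 + |y|) ^ k ≤ (2 * (1 + |x|)) ^ k := by
      apply pow_le_pow_left₀ (by positivity)
      nlinarith [abs_nonneg x]
    calc |V y| ≤ C * (1 + |y|) ^ k := hb y
      _ ≤ C * (2 * (1 + |x|)) ^ k := mul_le_mul_of_nonneg_left step hC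
      _ = C * 2 ^ k * (1 + |x|) ^ k := by rw [mul_pow]; ring
  have hup : rder V x ≤ V (x + 1) - V x := by
    have := rder_le_slope hV (show x < x + 1 by linarith)
    rwa [slope_def_field, show x + 1 - x = 1 by ring, div_one] at this
  have hlo : V x - V (x - 1) ≤ rder V x := by
    have := slope_le_rder hV (show x - 1 < x by linarith)
    rw [slope_def_field] at this
    have h2 : (V (x - 1) - V x) / (x - 1 - x) = V x - V (x - 1) := by
      rw [show x - 1 - x = -1 by ring]; field_simp; ring
    rwa [h2] at this
  have b0 := abs_le.mp (key x (by simp))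
  have b1 := abs_le.mp (key (x + 1) (by simp))
  have b2 := abs_le.mp (key (x - 1) (by simp))
  rw [abs_le]
  constructor
  · nlinarith [pow_nonneg h1x k, b0.1, b0.2, b2.1, b2.2]
  · nlinarith [pow_nonneg h1x k, b0.1, b0.2, b1.1, b1.2]

/-! ### Gaussian moments -/

lemma abs_pow_le_exp (x : ℝ) (k : ℕ) : |x| ^ k ≤ Real.exp ((k : ℝ) * |x|) := by
  have h1 : |x| ≤ Real.exp |x| := by
    have := Real.add_one_le_exp |x|
    linarith [abs_nonneg x]
  calc |x| ^ k ≤ Real.exp |x| ^ k := pow_le_pow_left₀ (abs_nonneg x) h1 k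
    _ = Real.exp ((k : ℝ) * |x|) := by rw [← Real.exp_nat_mul]

lemma integrable_abs_pow_mul_exp {b : ℝ} (hb : 0 < b) (k : ℕ) :
    Integrable (fun x : ℝ => |x| ^ k * Real.exp (-b * x ^ 2)) := by
  have h2 : Integrable (fun x : ℝ => Real.exp (-(b / 2) * x ^ 2)) :=
    integrable_exp_neg_mul_sq (by linarith)
  refine ((h2.const_mul (Real.exp ((k : ℝ) ^ 2 / (2 * b)))).mono'
    ?_ (Filter.Eventually.of_forall fun x => ?_))
  · exact ((continuous_abs.pow k).mul
      ((continuous_const.mul (continuous_pow 2)).rexp)).aestronglyMeasurable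
  · have h0 : (0:ℝ) ≤ |x| ^ k * Real.exp (-b * x ^ 2) := by positivity
    rw [Real.norm_eq_abs, abs_of_nonneg h0]
    calc |x| ^ k * Real.exp (-b * x ^ 2)
        ≤ Real.exp ((k : ℝ) * |x|) * Real.exp (-b * x ^ 2) := by
          gcongr; exact abs_pow_le_exp x k
      _ = Real.exp ((k : ℝ) * |x| + -b * x ^ 2) := by rw [← Real.exp_add]
      _ ≤ Real.exp ((k : ℝ) ^ 2 / (2 * b) + -(b / 2) * x ^ 2) := by
          apply Real.exp_le_exp.2
          have h2b : (0:ℝ) < 2 * b := by linarith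
          have hkey : (k : ℝ) * |x| - (b / 2) * x ^ 2 ≤ (k : ℝ) ^ 2 / (2 * b) := by
            rw [le_div_iff₀ h2b]
            rcases abs_cases x with ⟨hx, _⟩ | ⟨hx, _⟩ <;> rw [hx] <;>
              nlinarith [sq_nonneg (b * x - (k : ℝ)), sq_nonneg (b * x + (k : ℝ))]
          linarith
      _ = Real.exp ((k : ℝ) ^ 2 / (2 * b)) * Real.exp (-(b / 2) * x ^ 2) := Real.exp_add _ _

lemma one_add_abs_pow_le (x : ℝ) (k : ℕ) : (1 + |x|) ^ k ≤ 2 ^ k * (1 + |x| ^ k) := by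
  rcases le_total (|x|) 1 with h | h
  · have h1 : (1 + |x|) ^ k ≤ 2 ^ k := by
      have : (1 + |x|) ^ k ≤ (2:ℝ) ^ k := pow_le_pow_left₀ (by positivity) (by linarith) k
      simpa using this
    nlinarith [pow_nonneg (abs_nonneg x) k, pow_pos (show (0:ℝ) < 2 by norm_num) k]
  · have h1 : (1 + |x|) ^ k ≤ (2 * |x|) ^ k := pow_le_pow_left₀ (by positivity) (by linarith) k
    have h2 : (2 * |x| : ℝ) ^ k = 2 ^ k * |x| ^ k := mul_pow 2 |x| k
    nlinarith [pow_pos (show (0:ℝ) < 2 by norm_num) k]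

lemma integrable_abs_pow_gaussian (m : ℝ) {v : ℝ≥0} (hv : v ≠ 0) (k : ℕ) :
    Integrable (fun x => |x| ^ k) (gaussianReal m v) := by
  rw [gaussianReal_of_var_ne_zero _ hv,
    integrable_withDensity_iff (measurable_gaussianPDF _ _)
      (Filter.Eventually.of_forall fun x => ENNReal.ofReal_lt_top)]
  have hpdf : ∀ x, ((gaussianPDF m v x).toReal : ℝ) = gaussianPDFReal m v x := fun x =>
    ENNReal.toReal_ofReal (gaussianPDFReal_nonneg _ _ _)
  simp only [hpdf]
  have hvpos : (0:ℝ) < (v:ℝ) := by positivity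
  set b : ℝ := (2 * (v:ℝ))⁻¹ with hbdef
  have hbpos : 0 < b := by positivity
  set c : ℝ := (Real.sqrt (2 * Real.pi * (v:ℝ)))⁻¹ with hcdef
  have hc0 : 0 ≤ c := by positivity
  -- the target function equals c * (|x|^k * exp (-b * (x-m)^2))
  have heq : (fun x : ℝ => |x| ^ k * gaussianPDFReal m v x)
      = fun x => c * (|x| ^ k * Real.exp (-b * (x - m) ^ 2)) := by
    funext x
    rw [gaussianPDFReal]
    have : -(x - m) ^ 2 / (2 * (v:ℝ)) = -b * (x - m) ^ 2 := by
      rw [hbdef]; field_simp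
    rw [this]; ring
  rw [heq]
  apply Integrable.const_mul
  -- shift: integrable of fun y => |y+m|^k * exp (-b y^2), composed with x - m
  have hF : Integrable (fun y : ℝ => |y + m| ^ k * Real.exp (-b * y ^ 2)) := by
    have hint : Integrable (fun y : ℝ =>
        (2 ^ k * (1 + |m|) ^ k) * (|y| ^ k * Real.exp (-b * y ^ 2))
          + (2 ^ k * (1 + |m|) ^ k) * Real.exp (-b * y ^ 2)) :=
      ((integrable_abs_pow_mul_exp hbpos k).const_mul _).add
        ((integrable_exp_neg_mul_sq hbpos).const_mul _)
    refine hint.mono' ?_ (Filter.Eventually.of_forall fun y => ?_)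
    · exact (((continuous_abs.comp (continuous_id.add continuous_const)).pow k).mul
        ((continuous_const.mul (continuous_pow 2)).rexp)).aestronglyMeasurable
    · have h0 : (0:ℝ) ≤ |y + m| ^ k * Real.exp (-b * y ^ 2) := by positivity
      rw [Real.norm_eq_abs, abs_of_nonneg h0]
      have hym : |y + m| ≤ |y| + |m| := abs_add_le y m
      have h1 : |y + m| ^ k ≤ (1 + |y| + |m|) ^ k :=
        pow_le_pow_left₀ (abs_nonneg _) (by linarith) k
      have h2 : (1 + |y| + |m|) ^ k ≤ ((1 + |m|) * (1 + |y|)) ^ k := by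
        apply pow_le_pow_left₀ (by positivity)
        nlinarith [abs_nonneg y, abs_nonneg m]
      have h3 : ((1 + |m|) * (1 + |y|)) ^ k = (1 + |m|) ^ k * (1 + |y|) ^ k := mul_pow _ _ _
      have h4 : (1 + |y|) ^ k ≤ 2 ^ k * (1 + |y| ^ k) := one_add_abs_pow_le y k
      have hexp : (0:ℝ) < Real.exp (-b * y ^ 2) := Real.exp_pos _
      have hm0 : (0:ℝ) ≤ (1 + |m|) ^ k := by positivity
      have h5 : |y + m| ^ k ≤ 2 ^ k * (1 + |m|) ^ k * (1 + |y| ^ k) := by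
        calc |y + m| ^ k ≤ (1 + |m|) ^ k * (1 + |y|) ^ k := by
              rw [← h3]; exact h1.trans h2
          _ ≤ (1 + |m|) ^ k * (2 ^ k * (1 + |y| ^ k)) :=
              mul_le_mul_of_nonneg_left h4 hm0
          _ = 2 ^ k * (1 + |m|) ^ k * (1 + |y| ^ k) := by ring
      have h6 := mul_le_mul_of_nonneg_right h5 hexp.le
      calc |y + m| ^ k * Real.exp (-b * y ^ 2)
          ≤ 2 ^ k * (1 + |m|) ^ k * (1 + |y| ^ k) * Real.exp (-b * y ^ 2) := h6
        _ = (2 ^ k * (1 + |m|) ^ k) * (|y| ^ k * Real.exp (-b * y ^ 2))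
              + (2 ^ k * (1 + |m|) ^ k) * Real.exp (-b * y ^ 2) := by ring
  have := hF.comp_sub_right m
  simpa using this

/-- Integrability of functions of polynomial growth against a Gaussian. -/
lemma integrable_of_poly_growth {f : ℝ → ℝ} (m : ℝ) {v : ℝ≥0} (hv : v ≠ 0)
    (hm : AEStronglyMeasurable f (gaussianReal m v)) {D : ℝ} {n : ℕ}
    (hbnd : ∀ x, |f x| ≤ D * (1 + |x|) ^ n) :
    Integrable f (gaussianReal m v) := by
  have hint : Integrable (fun x : ℝ => D * (2 ^ n * (1 + |x| ^ n))) (gaussianReal m v) :=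
    (((integrable_const (1:ℝ)).add (integrable_abs_pow_gaussian m hv n)).const_mul
      (2 ^ n)).const_mul D
  refine hint.mono' hm (Filter.Eventually.of_forall fun x => ?_)
  rw [Real.norm_eq_abs]
  have hD : 0 ≤ D := by
    have := (abs_nonneg (f 0)).trans (hbnd 0)
    nlinarith [pow_pos (show (0:ℝ) < 1 + |(0:ℝ)| by simp) n]
  calc |f x| ≤ D * (1 + |x|) ^ n := hbnd x
    _ ≤ D * (2 ^ n * (1 + |x| ^ n)) := by gcongr; exact one_add_abs_pow_le x n

/-- Polynomial bounds compose with affine maps. -/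
lemma poly_growth_affine {f : ℝ → ℝ} {D : ℝ} {n : ℕ} (hD : 0 ≤ D)
    (hbnd : ∀ x, |f x| ≤ D * (1 + |x|) ^ n) (c d x : ℝ) :
    |f (c * x + d)| ≤ (D * (1 + |c| + |d|) ^ n) * (1 + |x|) ^ n := by
  have h1 : |c * x + d| ≤ |c| * |x| + |d| := by
    calc |c * x + d| ≤ |c * x| + |d| := abs_add_le _ _
      _ = |c| * |x| + |d| := by rw [abs_mul]
  have hle : 1 + |c * x + d| ≤ (1 + |c| + |d|) * (1 + |x|) := by
    nlinarith [abs_nonneg c, abs_nonneg x, abs_nonneg d]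
  calc |f (c * x + d)| ≤ D * (1 + |c * x + d|) ^ n := hbnd _
    _ ≤ D * ((1 + |c| + |d|) * (1 + |x|)) ^ n :=
        mul_le_mul_of_nonneg_left (pow_le_pow_left₀ (by positivity) hle n) hD
    _ = (D * (1 + |c| + |d|) ^ n) * (1 + |x|) ^ n := by rw [mul_pow]; ring

end ActivistAux

open ActivistAux

set_option maxHeartbeats 1000000 in
/-- Transport optimality in the activist trading model (Lemma 6.2): for convex `V` with
polynomial growth, the decreasing affine coupling `I(z) = −(z+m_β)/λ` between the
Gaussian law `μ = N(−m_β, σ_β² + σ²T)` and `ν = N(0, σ²T)` maximizes `∫ V(y−z) dπ`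
over all couplings `π` of `(μ, ν)`. -/
theorem activist_coupling_optimal (V : ℝ → ℝ) (hV : ConvexOn ℝ Set.univ V)
    (C : ℝ) (hC : 0 < C) (k : ℕ) (hgrowth : ∀ x, |V x| ≤ C * (1 + |x|^k))
    (σ T σβ mβ : ℝ) (hσ : 0 < σ) (hT : 0 < T) (hσβ : 0 < σβ) :
    ∀ π : Measure (ℝ × ℝ), IsProbabilityMeasure π →
      π.map Prod.fst = gaussianReal (-mβ) ((σβ^2 + σ^2*T).toNNReal) →
      π.map Prod.snd = gaussianReal 0 ((σ^2*T).toNNReal) →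
      ∫ q, V (q.2 - q.1) ∂π ≤
        ∫ z, V (-(z + mβ) / Real.sqrt (1 + σβ^2 / (σ^2*T)) - z)
          ∂(gaussianReal (-mβ) ((σβ^2 + σ^2*T).toNNReal)) := by
  intro π hπ h1 h2
  -- ## Setup and notation
  have hσT : (0:ℝ) < σ^2 * T := by positivity
  set lam : ℝ := Real.sqrt (1 + σβ^2 / (σ^2*T)) with hlam_def
  have hlam_sq : lam^2 = 1 + σβ^2 / (σ^2*T) := Real.sq_sqrt (by positivity)
  have hlam_pos : 0 < lam := Real.sqrt_pos.mpr (by positivity)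
  have hdivpos : 0 < σβ^2 / (σ^2*T) := by positivity
  have hlam1 : 1 ≤ lam := by nlinarith
  set v1 : ℝ≥0 := (σβ^2 + σ^2*T).toNNReal with hv1_def
  set v2 : ℝ≥0 := (σ^2*T).toNNReal with hv2_def
  have hv1 : v1 ≠ 0 := by
    simp only [hv1_def, ne_eq, Real.toNNReal_eq_zero, not_le]
    nlinarith
  have hv2 : v2 ≠ 0 := by
    simp only [hv2_def, ne_eq, Real.toNNReal_eq_zero, not_le]
    nlinarith
  set μm : Measure ℝ := gaussianReal (-mβ) v1 with hμm_def
  set νm : Measure ℝ := gaussianReal 0 v2 with hνm_def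
  set I : ℝ → ℝ := fun z => -(z + mβ) / lam with hI_def
  have hImeas : Measurable I := ((measurable_id.add_const mβ).neg.div_const lam)
  have hIcont : Continuous I := ((continuous_id.add continuous_const).neg.div_const lam)
  -- ## Growth bound in the `(1+|x|)^k` form
  have hVb : ∀ x, |V x| ≤ (2*C) * (1+|x|)^k := by
    intro x
    have h1' := hgrowth x
    have h2' : |x|^k ≤ (1+|x|)^k := pow_le_pow_left₀ (abs_nonneg x) (by linarith) k
    have h3' : (1:ℝ) ≤ (1+|x|)^k := by
      have := pow_le_pow_left₀ (zero_le_one) (show (1:ℝ) ≤ 1 + |x| by linarith [abs_nonneg x]) k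
      simpa using this
    nlinarith [mul_le_mul_of_nonneg_left h2' hC.le, mul_le_mul_of_nonneg_left h3' hC.le]
  have hVcont : Continuous V := continuousOn_univ.mp
    (ConvexOn.continuousOn isOpen_univ hV)
  -- ## The monotone right derivative g and the potential ψ
  set g : ℝ → ℝ := ActivistAux.rder V with hg_def
  have hgmono : Monotone g := rder_mono hV
  set Cg : ℝ := 2 * (2*C) * 2^k with hCg_def
  have hCg : 0 ≤ Cg := by positivity
  have hgb : ∀ x, |g x| ≤ Cg * (1+|x|)^k := rder_growth hV hVb
  have hftc : ∀ u w : ℝ, ∫ t in u..w, g t = V w - V u := rder_ftc hV hVcont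
  set G : ℝ → ℝ := fun s => g ((1+lam)*s + mβ) with hG_def
  have hGmono : Monotone G := by
    intro s t hst
    apply hgmono
    have := mul_le_mul_of_nonneg_left hst (show (0:ℝ) ≤ 1 + lam by linarith)
    linarith
  have hGint : ∀ a b : ℝ, IntervalIntegrable G volume a b := fun a b =>
    hGmono.intervalIntegrable
  set ψ : ℝ → ℝ := fun y => ∫ s in (0:ℝ)..y, G s with hψ_def
  have hψcont : Continuous ψ := intervalIntegral.continuous_primitive hGint 0
  -- growth bound for G
  set CG : ℝ := Cg * (1 + |1+lam| + |mβ|)^k with hCG_def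
  have hCG : 0 ≤ CG := by positivity
  have hGb : ∀ s, |G s| ≤ CG * (1+|s|)^k := by
    intro s
    simpa only [hG_def, hCG_def] using poly_growth_affine hCg hgb (1+lam) mβ s
  -- growth bound for ψ
  have hone_le : ∀ y : ℝ, (1:ℝ) ≤ (1+|y|)^k := by
    intro y
    have := pow_le_pow_left₀ (zero_le_one)
      (show (1:ℝ) ≤ 1 + |y| by linarith [abs_nonneg y]) k
    simpa using this
  have hψb : ∀ y, |ψ y| ≤ CG * (1+|y|)^(k+1) := by
    intro y
    have hbound : ∀ s ∈ Set.uIoc (0:ℝ) y, ‖G s‖ ≤ CG * (1+|y|)^k := by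
      intro s hs
      rw [Real.norm_eq_abs]
      have hG0 := abs_le.mp (hGb 0)
      have hGy := abs_le.mp (hGb y)
      have hCGy : CG * 1 ≤ CG * (1+|y|)^k := by
        apply mul_le_mul_of_nonneg_left (hone_le y) hCG
      simp only [abs_zero, add_zero, one_pow, mul_one] at hG0
      rcases le_total (0:ℝ) y with h | h
      · rw [Set.uIoc_of_le h] at hs
        refine abs_le.mpr ⟨?_, ?_⟩
        · have := hGmono hs.1.le
          linarith [hG0.1]
        · have := hGmono hs.2
          linarith [hGy.2]
      · rw [Set.uIoc_of_ge h] at hs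
        refine abs_le.mpr ⟨?_, ?_⟩
        · have := hGmono hs.1.le
          linarith [hGy.1]
        · have := hGmono hs.2
          linarith [hG0.2]
    have hnorm := intervalIntegral.norm_integral_le_of_norm_le_const hbound
    rw [Real.norm_eq_abs] at hnorm
    have habs : |ψ y| ≤ CG * (1+|y|)^k * |y| := by
      simpa [hψ_def] using hnorm
    calc |ψ y| ≤ CG * (1+|y|)^k * |y| := habs
      _ ≤ CG * (1+|y|)^k * (1+|y|) := by
          apply mul_le_mul_of_nonneg_left (by linarith [abs_nonneg y]) (by positivity)
      _ = CG * (1+|y|)^(k+1) := by rw [pow_succ]; ring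
  -- ## The pointwise coupling inequality
  have hIz : ∀ z, lam * I z = -(z+mβ) := by
    intro z
    simp only [hI_def]
    field_simp
  have key : ∀ z y : ℝ, V (y - z) ≤ V (I z - z) + (ψ y - ψ (I z)) := by
    intro z y
    have harg : ∀ t : ℝ, (1+lam)*(t+z) + mβ = t + lam * (t - (I z - z)) := by
      intro t
      linear_combination hIz z
    -- rewrite ψ y - ψ (I z) as a shifted interval integral
    have hdiff : ψ y - ψ (I z) = ∫ t in (I z - z)..(y - z), G (t + z) := by
      have hadd := intervalIntegral.integral_add_adjacent_intervals
        (hGint 0 (I z)) (hGint (I z) y)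
      have hcar : ∫ t in (I z - z)..(y - z), G (t + z) = ∫ s in (I z)..y, G s := by
        rw [intervalIntegral.integral_comp_add_right G z]
        congr 1 <;> ring
      rw [hcar]
      simp only [hψ_def]
      linarith [hadd]
    -- compare the two integrals
    have hmonoGz : Monotone (fun t => G (t + z)) := fun s t hst => hGmono (by linarith)
    have hcmp : ∫ t in (I z - z)..(y - z), g t ≤ ∫ t in (I z - z)..(y - z), G (t + z) := by
      rcases le_total (I z - z) (y - z) with h | h
      · refine intervalIntegral.integral_mono_on h hgmono.intervalIntegrable
          hmonoGz.intervalIntegrable (fun t ht => ?_)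
        have ht1 : I z - z ≤ t := ht.1
        have hle : t ≤ (1+lam)*(t+z) + mβ := by
          rw [harg t]
          nlinarith
        simpa only [hG_def] using hgmono hle
      · have hrev : ∫ t in (y - z)..(I z - z), G (t + z) ≤ ∫ t in (y - z)..(I z - z), g t := by
          refine intervalIntegral.integral_mono_on h hmonoGz.intervalIntegrable
            hgmono.intervalIntegrable (fun t ht => ?_)
          have ht2 : t ≤ I z - z := ht.2
          have hle : (1+lam)*(t+z) + mβ ≤ t := by
            rw [harg t]
            nlinarith
          simpa only [hG_def] using hgmono hle
        have hsym1 : ∫ t in (I z - z)..(y - z), g t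
            = -∫ t in (y - z)..(I z - z), g t := intervalIntegral.integral_symm _ _
        have hsym2 : ∫ t in (I z - z)..(y - z), G (t + z)
            = -∫ t in (y - z)..(I z - z), G (t + z) := intervalIntegral.integral_symm _ _
        rw [hsym1, hsym2]
        linarith
    have hVab : ∫ t in (I z - z)..(y - z), g t = V (y - z) - V (I z - z) := hftc _ _
    linarith
  -- ## Transport of the second marginal: ν is the image of μ under I
  have hlam_ne : lam ≠ 0 := ne_of_gt hlam_pos
  have hmapI : μm.map I = νm := by
    have hIfun : I = (fun x => x + (-(mβ/lam))) ∘ (fun x => (-lam⁻¹) * x) := by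
      funext z
      simp only [Function.comp_apply, hI_def]
      field_simp
      ring
    rw [hIfun, ← Measure.map_map (measurable_add_const _) (measurable_const_mul _),
      hμm_def, gaussianReal_map_const_mul, gaussianReal_map_add_const, hνm_def]
    congr 1
    · field_simp; ring
    · apply NNReal.coe_injective
      push_cast
      rw [Real.coe_toNNReal _ (by positivity), Real.coe_toNNReal _ (by positivity)]
      have h2' : lam^2 * (σ^2*T) = σ^2*T + σβ^2 := by
        rw [hlam_sq]
        field_simp
      have hne : lam^2 ≠ 0 := by positivity
      field_simp
      nlinarith [h2']
  -- ## Integrability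
  have hf1cont : Continuous (fun z => V (I z - z)) :=
    hVcont.comp (hIcont.sub continuous_id)
  have hψIcont : Continuous (fun z => ψ (I z)) := hψcont.comp hIcont
  have hWcont : Continuous (fun q : ℝ×ℝ => V (q.2 - q.1)) :=
    hVcont.comp (continuous_snd.sub continuous_fst)
  have hf1b : ∀ z, |V (I z - z)| ≤ ((2*C) * (1 + |(-lam⁻¹-1)| + |(-(mβ/lam))|)^k) * (1+|z|)^k := by
    intro z
    have hb := poly_growth_affine (by linarith : (0:ℝ) ≤ 2*C) hVb (-lam⁻¹-1) (-(mβ/lam)) z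
    have heq : (-lam⁻¹-1) * z + (-(mβ/lam)) = I z - z := by
      simp only [hI_def]
      field_simp
      ring
    rwa [heq] at hb
  have hf1int : Integrable (fun z => V (I z - z)) μm := by
    rw [hμm_def]
    exact integrable_of_poly_growth _ hv1 hf1cont.aestronglyMeasurable hf1b
  have hψIb : ∀ z, |ψ (I z)| ≤ (CG * (1 + |(-lam⁻¹)| + |(-(mβ/lam))|)^(k+1)) * (1+|z|)^(k+1) := by
    intro z
    have hb := poly_growth_affine hCG hψb (-lam⁻¹) (-(mβ/lam)) z
    have heq : (-lam⁻¹) * z + (-(mβ/lam)) = I z := by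
      simp only [hI_def]
      field_simp
      ring
    rwa [heq] at hb
  have hψIint : Integrable (fun z => ψ (I z)) μm := by
    rw [hμm_def]
    exact integrable_of_poly_growth _ hv1 hψIcont.aestronglyMeasurable hψIb
  have hψint : Integrable ψ νm := by
    rw [hνm_def]
    exact integrable_of_poly_growth _ hv2 hψcont.aestronglyMeasurable hψb
  have hfst : AEMeasurable (Prod.fst : ℝ×ℝ → ℝ) π := measurable_fst.aemeasurable
  have hsnd : AEMeasurable (Prod.snd : ℝ×ℝ → ℝ) π := measurable_snd.aemeasurable
  -- transfers to π
  have hIf1π : Integrable (fun q : ℝ×ℝ => V (I q.1 - q.1)) π := by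
    have h := hf1int
    rw [← h1] at h
    exact (integrable_map_measure hf1cont.aestronglyMeasurable hfst).mp h
  have hψsndπ : Integrable (fun q : ℝ×ℝ => ψ q.2) π := by
    have h := hψint
    rw [← h2] at h
    exact (integrable_map_measure hψcont.aestronglyMeasurable hsnd).mp h
  have hψIfstπ : Integrable (fun q : ℝ×ℝ => ψ (I q.1)) π := by
    have h := hψIint
    rw [← h1] at h
    exact (integrable_map_measure hψIcont.aestronglyMeasurable hfst).mp h
  -- integrability of the transport cost itself
  have hpow1 : Integrable (fun q : ℝ×ℝ => (1+|q.1|)^(k*2)) π := by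
    have hint : Integrable (fun x : ℝ => (1+|x|)^(k*2)) μm := by
      rw [hμm_def]
      refine integrable_of_poly_growth (D := 1) (n := k*2) _ hv1
        ((continuous_const.add continuous_abs).pow _).aestronglyMeasurable (fun x => ?_)
      rw [abs_of_nonneg (by positivity), one_mul]
    rw [← h1] at hint
    exact (integrable_map_measure
      ((continuous_const.add continuous_abs).pow _).aestronglyMeasurable hfst).mp hint
  have hpow2 : Integrable (fun q : ℝ×ℝ => (1+|q.2|)^(k*2)) π := by
    have hint : Integrable (fun x : ℝ => (1+|x|)^(k*2)) νm := by
      rw [hνm_def]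
      refine integrable_of_poly_growth (D := 1) (n := k*2) _ hv2
        ((continuous_const.add continuous_abs).pow _).aestronglyMeasurable (fun x => ?_)
      rw [abs_of_nonneg (by positivity), one_mul]
    rw [← h2] at hint
    exact (integrable_map_measure
      ((continuous_const.add continuous_abs).pow _).aestronglyMeasurable hsnd).mp hint
  have hFπ : Integrable (fun q : ℝ×ℝ => V (q.2 - q.1)) π := by
    have hint : Integrable (fun q : ℝ×ℝ =>
        (2*C) * (1+|q.1|)^(k*2) + (2*C) * (1+|q.2|)^(k*2)) π :=
      (hpow1.const_mul _).add (hpow2.const_mul _)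
    refine hint.mono' hWcont.aestronglyMeasurable (Filter.Eventually.of_forall fun q => ?_)
    rw [Real.norm_eq_abs]
    have hstep1 : |V (q.2 - q.1)| ≤ (2*C) * (1+|q.2 - q.1|)^k := hVb _
    have hstep2 : (1+|q.2 - q.1|) ≤ (1+|q.1|) * (1+|q.2|) := by
      have h1' : |q.2 - q.1| ≤ |q.2| + |q.1| := abs_sub q.2 q.1
      nlinarith [mul_nonneg (abs_nonneg q.1) (abs_nonneg q.2)]
    have hstep3 : (1+|q.2 - q.1|)^k ≤ ((1+|q.1|) * (1+|q.2|))^k :=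
      pow_le_pow_left₀ (by positivity) hstep2 k
    have hstep4 : ((1+|q.1|) * (1+|q.2|))^k ≤ (1+|q.1|)^(k*2) + (1+|q.2|)^(k*2) := by
      have ha : (0:ℝ) ≤ (1+|q.1|)^k := by positivity
      have hb : (0:ℝ) ≤ (1+|q.2|)^k := by positivity
      have hsq : ((1+|q.1|) * (1+|q.2|))^k = (1+|q.1|)^k * (1+|q.2|)^k := mul_pow _ _ _
      have h2a : (1+|q.1|)^(k*2) = ((1+|q.1|)^k)^2 := by rw [pow_mul]
      have h2b : (1+|q.2|)^(k*2) = ((1+|q.2|)^k)^2 := by rw [pow_mul]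
      rw [hsq, h2a, h2b]
      nlinarith [sq_nonneg ((1+|q.1|)^k - (1+|q.2|)^k)]
    calc |V (q.2 - q.1)| ≤ (2*C) * (1+|q.2 - q.1|)^k := hstep1
      _ ≤ (2*C) * ((1+|q.1|)^(k*2) + (1+|q.2|)^(k*2)) := by
          apply mul_le_mul_of_nonneg_left (hstep3.trans hstep4) (by linarith)
      _ = (2*C) * (1+|q.1|)^(k*2) + (2*C) * (1+|q.2|)^(k*2) := by ring
  -- ## Putting everything together
  have e1 : ∫ z, V (I z - z) ∂μm = ∫ q, V (I q.1 - q.1) ∂π := by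
    rw [← h1, integral_map hfst hf1cont.aestronglyMeasurable]
  have e2 : ∫ y, ψ y ∂νm = ∫ q, ψ q.2 ∂π := by
    rw [← h2, integral_map hsnd hψcont.aestronglyMeasurable]
  have e3 : ∫ y, ψ y ∂νm = ∫ z, ψ (I z) ∂μm := by
    rw [← hmapI, integral_map hImeas.aemeasurable hψcont.aestronglyMeasurable]
  have e4 : ∫ z, ψ (I z) ∂μm = ∫ q, ψ (I q.1) ∂π := by
    rw [← h1, integral_map hfst hψIcont.aestronglyMeasurable]
  have main : ∫ q, V (q.2 - q.1) ∂π ≤ ∫ z, V (I z - z) ∂μm := by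
    have step1 : ∫ q, V (q.2 - q.1) ∂π
        ≤ ∫ q, (V (I q.1 - q.1) + (ψ q.2 - ψ (I q.1))) ∂π :=
      integral_mono hFπ (hIf1π.add (hψsndπ.sub hψIfstπ)) (fun q => key q.1 q.2)
    have hsub : Integrable (fun q : ℝ×ℝ => ψ q.2 - ψ (I q.1)) π := hψsndπ.sub hψIfstπ
    have step2 : ∫ q, (V (I q.1 - q.1) + (ψ q.2 - ψ (I q.1))) ∂π
        = ∫ q, V (I q.1 - q.1) ∂π + (∫ q, ψ q.2 ∂π - ∫ q, ψ (I q.1) ∂π) := by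
      rw [integral_add hIf1π hsub, integral_sub hψsndπ hψIfstπ]
    have hcancel : ∫ q, ψ q.2 ∂π = ∫ q, ψ (I q.1) ∂π := by
      rw [← e2, e3, e4]
    rw [step2, hcancel] at step1
    linarith [e1]
  calc ∫ q, V (q.2 - q.1) ∂π ≤ ∫ z, V (I z - z) ∂μm := main
    _ = ∫ z, V (-(z + mβ) / lam - z) ∂μm := by simp only [hI_def]
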